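/- Let T be nonexpansive and S nonspreading on C with common fixed point q, δ ∈ (0,1), A_T, A_S the averaged mappings, and Uₙ = βₙA_T + (1−βₙ)A_S with βₙ ∈ [0,1]. Then ‖Uₙx − q‖² ≤ ‖x−q‖² − (1−βₙ)(1−δ)‖x−A_Sx‖² − βₙ(1−βₙ)‖A_Tx−A_Sx‖² for all x ∈ C. -/

import Mathlib

lemma comb_norm_sq {H : Type*} [NormedAddCommGroup H] [InnerProductSpace ℝ H]
    (a b : H) (β : ℝ) :
    ‖β • a + (1 - β) • b‖ ^ 2 =
      β * ‖a‖ ^ 2 + (1 - β) * ‖b‖ ^ 2 - β * (1 - β) * ‖a - b‖ ^ 2 := by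
  have h1 : ‖β • a + (1 - β) • b‖ ^ 2 =
      ‖β • a‖ ^ 2 + 2 * inner ℝ (β • a) ((1 - β) • b) + ‖(1 - β) • b‖ ^ 2 :=
    norm_add_sq_real _ _
  have h2 : ‖a - b‖ ^ 2 = ‖a‖ ^ 2 - 2 * inner ℝ a b + ‖b‖ ^ 2 := norm_sub_sq_real a b
  have h3 : (inner ℝ (β • a) ((1 - β) • b) : ℝ) = β * (1 - β) * inner ℝ a b := by
    rw [real_inner_smul_left, real_inner_smul_right]; ring
  have h4 : ‖β • a‖ ^ 2 = β ^ 2 * ‖a‖ ^ 2 := by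
    rw [norm_smul]; simp [mul_pow, sq_abs]
  have h5 : ‖(1 - β) • b‖ ^ 2 = (1 - β) ^ 2 * ‖b‖ ^ 2 := by
    rw [norm_smul]; simp [mul_pow, sq_abs]
  rw [h1, h3, h4, h5]; nlinarith [h2]

theorem stmt_16 {H : Type*} [NormedAddCommGroup H] [InnerProductSpace ℝ H]
    (C : Set H) (hC : C.Nonempty) (hCc : IsClosed C) (hCv : Convex ℝ C)
    (T S : H → H) (hT : Set.MapsTo T C C) (hS : Set.MapsTo S C C)
    (hne : ∀ x ∈ C, ∀ y ∈ C, ‖T x - T y‖ ≤ ‖x - y‖)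
    (hns : ∀ x ∈ C, ∀ y ∈ C, 2 * ‖S x - S y‖ ^ 2 ≤ ‖S x - y‖ ^ 2 + ‖x - S y‖ ^ 2)
    (q : H) (hqC : q ∈ C) (hqT : T q = q) (hqS : S q = q)
    (δ : ℝ) (hδ : δ ∈ Set.Ioo (0 : ℝ) 1)
    (AT AS : H → H)
    (hAT : ∀ x, AT x = (1 - δ) • x + δ • T x)
    (hAS : ∀ x, AS x = (1 - δ) • x + δ • S x)
    (βn : ℝ) (hβ : βn ∈ Set.Icc (0 : ℝ) 1) :
    ∀ x ∈ C,
      ‖(βn • AT x + (1 - βn) • AS x) - q‖ ^ 2 ≤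
        ‖x - q‖ ^ 2 - (1 - βn) * (1 - δ) * ‖x - AS x‖ ^ 2
          - βn * (1 - βn) * ‖AT x - AS x‖ ^ 2 := by
  obtain ⟨hδ0, hδ1⟩ := hδ
  obtain ⟨hβ0, hβ1⟩ := hβ
  intro x hx
  -- S quasi-nonexpansive
  have hSq : ‖S x - q‖ ^ 2 ≤ ‖x - q‖ ^ 2 := by
    have := hns x hx q hqC
    rw [hqS] at this
    linarith
  -- T quasi-nonexpansive
  have hTq : ‖T x - q‖ ≤ ‖x - q‖ := by
    have := hne x hx q hqC
    rwa [hqT] at this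
  -- decompositions
  have hATd : AT x - q = (1 - δ) • (x - q) + δ • (T x - q) := by
    rw [hAT]; module
  have hASd : AS x - q = (1 - δ) • (x - q) + δ • (S x - q) := by
    rw [hAS]; module
  have hxAS : x - AS x = δ • (x - S x) := by
    rw [hAS]; module
  have hxSd : (x - q) - (S x - q) = x - S x := by abel
  -- ‖AS x - q‖² bound
  have hASb : ‖AS x - q‖ ^ 2 ≤ ‖x - q‖ ^ 2 - δ * (1 - δ) * ‖x - S x‖ ^ 2 := by
    rw [hASd]
    have := comb_norm_sq (x - q) (S x - q) (1 - δ)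
    rw [hxSd] at this
    simp only [sub_sub_cancel] at this
    rw [this]
    nlinarith
  -- ‖x - AS x‖² = δ² ‖x - S x‖²
  have hxASn : ‖x - AS x‖ ^ 2 = δ ^ 2 * ‖x - S x‖ ^ 2 := by
    rw [hxAS, norm_smul]
    simp [mul_pow, sq_abs]
  -- ‖AT x - q‖ bound
  have hATb : ‖AT x - q‖ ^ 2 ≤ ‖x - q‖ ^ 2 := by
    have h : ‖AT x - q‖ ≤ ‖x - q‖ := by
      rw [hATd]
      calc ‖(1 - δ) • (x - q) + δ • (T x - q)‖
          ≤ ‖(1 - δ) • (x - q)‖ + ‖δ • (T x - q)‖ := norm_add_le _ _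
        _ = (1 - δ) * ‖x - q‖ + δ * ‖T x - q‖ := by
            rw [norm_smul, norm_smul, Real.norm_eq_abs, Real.norm_eq_abs,
              abs_of_pos hδ0, abs_of_pos (by linarith)]
        _ ≤ (1 - δ) * ‖x - q‖ + δ * ‖x - q‖ := by nlinarith
        _ = ‖x - q‖ := by ring
    have := norm_nonneg (AT x - q)
    nlinarith
  -- main combination
  have hmain : (βn • AT x + (1 - βn) • AS x) - q
      = βn • (AT x - q) + (1 - βn) • (AS x - q) := by module
  rw [hmain, comb_norm_sq]
  have hd : (AT x - q) - (AS x - q) = AT x - AS x := by abel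
  rw [hd]
  have hδδ : δ * (1 - δ) * ‖x - S x‖ ^ 2 ≥ (1 - δ) * ‖x - AS x‖ ^ 2 := by
    rw [hxASn]
    nlinarith [mul_nonneg (mul_nonneg (mul_pos hδ0 (sub_pos.mpr hδ1)).le
      (sub_pos.mpr hδ1).le) (sq_nonneg ‖x - S x‖)]
  nlinarith [sq_nonneg ‖AT x - AS x‖]
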